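/- Let S : Θ → Θ be invertible on a compact metric space Θ, and let θ ↦ f_θ ∈ D(I) satisfy d⁰(f_θ, f_{θ'}) ≤ L·d(θ,θ') for all θ, θ'. Suppose θ' lies in the local stable fibre of θ, meaning d(S^{−n}θ, S^{−n}θ') ≤ C α^n d(θ,θ') for all n > 0, with constants C > 0, α ∈ (0,1), and suppose α·Q_f < 1 where Q_f = sup_{θ,y} f'_θ(y). Then for all n, k with 0 ≤ k ≤ n, d⁰(f^k_{S^{−n}θ} ∘ (f^k_{S^{−n}θ'})⁻¹, id) ≤ C' α^{n−k} d(θ,θ'), where C' = αCL/(1 − αQ_f) and f^k_θ = f_{S^{k−1}θ} ∘ ⋯ ∘ f_θ. -/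

import Mathlib

open Set Filter

/-- Iterates of the fibre maps: `fiter S f n θ = f_{S^{n-1}θ} ∘ ⋯ ∘ f_θ`. -/
def fiter {Θ : Type*} (S : Θ → Θ) (f : Θ → ℝ → ℝ) : ℕ → Θ → ℝ → ℝ
  | 0, _, y => y
  | n + 1, θ, y => f (S^[n] θ) (fiter S f n θ y)

/-- Lemma `coro:id`. If `θ ↦ f_θ` is Lipschitz (`d⁰(f_θ, f_{θ'}) ≤ L·d(θ,θ')`),
`θ'` lies in the local stable fibre of `θ` (`d(S^{-n}θ, S^{-n}θ') ≤ Cα^n d(θ,θ')`), and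
`α·Q_f < 1` with `Q_f = sup f'_θ`, then for `0 ≤ k ≤ n`,
`d⁰(f^k_{S^{-n}θ} ∘ (f^k_{S^{-n}θ'})⁻¹, id) ≤ C' α^{n-k} d(θ,θ')` with
`C' = αCL/(1 - αQ_f)`. Substituting `z = f^k_{S^{-n}θ'}(y)`, the `d⁰` bound reads
`|f^k_{S^{-n}θ}(y) - f^k_{S^{-n}θ'}(y)| ≤ C' α^{n-k} d(θ,θ')` for all `y ∈ I`. -/
theorem stmt2 {Θ : Type*} [MetricSpace Θ] [CompactSpace Θ]
    (S : Θ ≃ Θ) (M : ℝ) (hM : 0 < M)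
    (f : Θ → ℝ → ℝ)
    (hmaps : ∀ θ, MapsTo (f θ) (Icc (-M) M) (Ioo (-M) M))
    (hmono : ∀ θ, StrictMonoOn (f θ) (Icc (-M) M))
    (hC1 : ∀ θ, ContDiffOn ℝ 1 (f θ) (Icc (-M) M))
    (hpos : ∀ θ, ∀ y ∈ Icc (-M) M, 0 < derivWithin (f θ) (Icc (-M) M) y)
    (L C α Qf : ℝ) (hL : 0 ≤ L) (hC : 0 < C) (hα : α ∈ Ioo (0:ℝ) 1)
    (hLip : ∀ θ θ' : Θ, ∀ y ∈ Icc (-M) M, |f θ y - f θ' y| ≤ L * dist θ θ')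
    (hQf : ∀ θ, ∀ y ∈ Icc (-M) M, derivWithin (f θ) (Icc (-M) M) y ≤ Qf)
    (hαQ : α * Qf < 1)
    (θ θ' : Θ)
    (hstable : ∀ n : ℕ, 0 < n →
      dist ((⇑S.symm)^[n] θ) ((⇑S.symm)^[n] θ') ≤ C * α ^ n * dist θ θ') :
    ∀ n k : ℕ, k ≤ n → ∀ y ∈ Icc (-M) M,
      |fiter S f k ((⇑S.symm)^[n] θ) y - fiter S f k ((⇑S.symm)^[n] θ') y|
        ≤ (α * C * L / (1 - α * Qf)) * α ^ (n - k) * dist θ θ' := by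
  have h0 : (0:ℝ) ∈ Icc (-M) M := ⟨by linarith, by linarith⟩
  have hQpos : 0 < Qf := lt_of_lt_of_le (hpos θ 0 h0) (hQf θ 0 h0)
  have hden : 0 < 1 - α * Qf := by linarith
  have hα0 := hα.1
  have hC'nonneg : 0 ≤ α * C * L / (1 - α * Qf) := by positivity
  have hfix : ∀ m (θ₀ : Θ), ∀ z ∈ Icc (-M) M, fiter S f m θ₀ z ∈ Icc (-M) M := by
    intro m
    induction m with
    | zero => intro θ₀ z hz; exact hz
    | succ m ih =>
      intro θ₀ z hz
      exact Ioo_subset_Icc_self (hmaps _ (ih θ₀ z hz))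
  have hLipy : ∀ (θ₀ : Θ), ∀ a ∈ Icc (-M) M, ∀ b ∈ Icc (-M) M,
      |f θ₀ a - f θ₀ b| ≤ Qf * |a - b| := by
    intro θ₀ a ha b hb
    have hdiff : DifferentiableOn ℝ (f θ₀) (Icc (-M) M) :=
      (hC1 θ₀).differentiableOn one_ne_zero
    have hb' : ∀ x ∈ Icc (-M) M, ‖derivWithin (f θ₀) (Icc (-M) M) x‖ ≤ Qf := by
      intro x hx
      rw [Real.norm_eq_abs, abs_of_pos (hpos θ₀ x hx)]
      exact hQf θ₀ x hx
    have := (convex_Icc (-M) M).norm_image_sub_le_of_norm_derivWithin_le hdiff hb' hb ha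
    simpa [Real.norm_eq_abs] using this
  intro n
  have hiter : ∀ j, j ≤ n → ∀ x : Θ, (⇑S)^[j] ((⇑S.symm)^[n] x) = (⇑S.symm)^[n - j] x := by
    intro j hj x
    have hli : Function.LeftInverse (⇑S) (⇑S.symm) := S.apply_symm_apply
    have h1 : (⇑S.symm)^[n] x = (⇑S.symm)^[j] ((⇑S.symm)^[n - j] x) := by
      rw [← Function.iterate_add_apply]
      congr 1
      omega
    rw [h1, hli.iterate j]
  intro k
  induction k with
  | zero =>
    intro _ y hy
    simp only [fiter, sub_self, abs_zero]
    positivity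
  | succ k ih =>
    intro hkn y hy
    have hk : k ≤ n := Nat.le_of_succ_le hkn
    have hD := ih hk y hy
    set A := (⇑S.symm)^[n] θ with hA
    set B := (⇑S.symm)^[n] θ' with hB
    have hGA : fiter S f k A y ∈ Icc (-M) M := hfix k A y hy
    have hGB : fiter S f k B y ∈ Icc (-M) M := hfix k B y hy
    have hiA : (⇑S)^[k] A = (⇑S.symm)^[n - k] θ := hiter k hk θ
    have hiB : (⇑S)^[k] B = (⇑S.symm)^[n - k] θ' := hiter k hk θ'
    have hnk : 0 < n - k := by omega
    have hst := hstable (n - k) hnk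
    simp only [fiter]
    have step1 : |f ((⇑S)^[k] A) (fiter S f k A y) - f ((⇑S)^[k] B) (fiter S f k B y)|
        ≤ |f ((⇑S)^[k] A) (fiter S f k A y) - f ((⇑S)^[k] A) (fiter S f k B y)|
          + |f ((⇑S)^[k] A) (fiter S f k B y) - f ((⇑S)^[k] B) (fiter S f k B y)| :=
      abs_sub_le _ _ _
    have step2 : |f ((⇑S)^[k] A) (fiter S f k A y) - f ((⇑S)^[k] A) (fiter S f k B y)|
        ≤ Qf * |fiter S f k A y - fiter S f k B y| := hLipy _ _ hGA _ hGB
    have step3 : |f ((⇑S)^[k] A) (fiter S f k B y) - f ((⇑S)^[k] B) (fiter S f k B y)|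
        ≤ L * (C * α ^ (n - k) * dist θ θ') := by
      refine le_trans (hLip _ _ _ hGB) ?_
      rw [hiA, hiB]
      exact mul_le_mul_of_nonneg_left hst hL
    have step4 : Qf * |fiter S f k A y - fiter S f k B y|
        ≤ Qf * (α * C * L / (1 - α * Qf) * α ^ (n - k) * dist θ θ') :=
      mul_le_mul_of_nonneg_left hD hQpos.le
    have key : α * C * L / (1 - α * Qf) * (1 - α * Qf) = α * C * L :=
      div_mul_cancel₀ _ hden.ne'
    have hpow : α ^ (n - k) = α * α ^ (n - (k + 1)) := by
      rw [← pow_succ']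
      congr 1
      omega
    have hfinal : Qf * (α * C * L / (1 - α * Qf) * α ^ (n - k) * dist θ θ')
        + L * (C * α ^ (n - k) * dist θ θ')
        = α * C * L / (1 - α * Qf) * α ^ (n - (k + 1)) * dist θ θ' := by
      rw [hpow]
      set c := α * C * L / (1 - α * Qf)
      linear_combination (-(α ^ (n - (k + 1)) * dist θ θ')) * key
    linarith [step1, step2.trans step4, step3]
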